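/- Let $\mathcal{O}$ be a Dedekind domain with field of fractions $K \neq \mathcal{O}$ and let $\Lambda \subseteq \Gamma$ be $\mathcal{O}$-orders in a finite-dimensional $K$-algebra. (i) If $X$ is a left $\Lambda$-lattice then there is an equality of right $\Gamma$-lattices $(\Gamma X)^{\vee} = (X^{\vee})^{\Gamma}$ and an equality of indices $[\Gamma X : X]_{\mathcal{O}} = [X^{\vee} : (X^{\vee})^{\Gamma}]_{\mathcal{O}}$. (ii) If $X$ is a right $\Lambda$-lattice then there is an equality of left $\Gamma$-lattices $(X\Gamma)^{\vee} = {}^{\Gamma}(X^{\vee})$ and an equality of indices $[X\Gamma : X]_{\mathcal{O}} = [X^{\vee} : {}^{\Gamma}(X^{\vee})]_{\mathcal{O}}$. -/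

import Mathlib

open scoped TensorProduct

universe u v w

/-- `K` is a global field: a number field or a finite extension of `𝔽_p(t)`. -/
def IsGlobalField (K : Type v) [Field K] : Prop :=
  NumberField K ∨
    ∃ (p : ℕ) (_ : Fact p.Prime) (_ : Algebra (RatFunc (ZMod p)) K),
      FiniteDimensional (RatFunc (ZMod p)) K

/-- A finite-dimensional `K`-algebra is separable iff it is semisimple after base change
to an algebraic closure of `K`. -/
def IsSeparableAlgebra (K : Type v) (A : Type w) [Field K] [Ring A] [Algebra K A] : Prop :=
  IsSemisimpleRing (AlgebraicClosure K ⊗[K] A)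

/-- The localisation at a prime `P` of an `O`-submodule of `V`, viewed as a subset of `V`. -/
def locAt (O : Type u) [CommRing O] {V : Type w} [AddCommGroup V] [Module O V]
    (P : Ideal O) (M : Submodule O V) : Set V :=
  {x : V | ∃ s : O, s ∉ P ∧ s • x ∈ M}

/-- `J ⊆ K` is the generalised module index `[M : N]_O` of two full `O`-lattices `M, N` in the
`K`-vector space `V`: at every maximal ideal `P` of `O` there is a `K`-linear automorphism `e`
of `V` carrying the localisation of `M` at `P` onto that of `N`, and the localisation of `J`
at `P` is the `O_P`-module generated by `det e`. -/
def IsIdx (O : Type u) [CommRing O] (K : Type v) [Field K] [Algebra O K]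
    {V : Type w} [AddCommGroup V] [Module K V] [Module O V] [IsScalarTower O K V]
    (M N : Submodule O V) (J : Submodule O K) : Prop :=
  ∀ P : Ideal O, P.IsMaximal →
    ∃ e : V ≃ₗ[K] V,
      (⇑e '' locAt O P M) = locAt O P N ∧
      locAt O P J = locAt O P (Submodule.span O {LinearMap.det (e : V →ₗ[K] V)})

/-- The image of an ideal of `O` in `K`, as an `O`-submodule of `K`. -/
def idealK (O : Type u) [CommRing O] (K : Type v) [Field K] [Algebra O K]
    (I : Ideal O) : Submodule O K :=
  Submodule.map (Algebra.linearMap O K) I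

/-- `Λ` is an `O`-order in the finite-dimensional `K`-algebra `A`: a subring of `A` which is a
full `O`-lattice in `A`. -/
def IsOrder (O : Type u) [CommRing O] (K : Type v) [Field K] [Algebra O K]
    (A : Type w) [Ring A] [Algebra K A] [Algebra O A] [IsScalarTower O K A]
    (Λ : Subalgebra O A) : Prop :=
  (Subalgebra.toSubmodule Λ).FG ∧ Submodule.span K (Λ : Set A) = ⊤

/-- `M` is a maximal `O`-order in `A`. -/
def IsMaximalOrder (O : Type u) [CommRing O] (K : Type v) [Field K] [Algebra O K]
    (A : Type w) [Ring A] [Algebra K A] [Algebra O A] [IsScalarTower O K A]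
    (M : Subalgebra O A) : Prop :=
  IsOrder O K A M ∧ ∀ Γ : Subalgebra O A, IsOrder O K A Γ → M ≤ Γ → Γ = M

/-- The subset `X` of the `A`-module `V` is stable under the subset `Λ` of `A`. -/
def IsStable {A : Type w} [Ring A] {V : Type w} [AddCommGroup V] [Module A V]
    (Λ : Set A) (X : Set V) : Prop :=
  ∀ a ∈ Λ, ∀ x ∈ X, a • x ∈ X

/-- The set of `Λ`-linear combinations of `v 0, …, v (n-1)`, for a subset `Λ` of `A`. -/
def freeImage {A : Type w} [Ring A] {V : Type w} [AddCommGroup V] [Module A V]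
    (Λ : Set A) {n : ℕ} (v : Fin n → V) : Set V :=
  (fun f : Fin n → A => ∑ i, f i • v i) '' {f | ∀ i, f i ∈ Λ}

/-- `Z` is a free lattice of rank `n` with respect to the subset `Λ` of `A`: it has an
`n`-element basis over `Λ` whose `A`-linear combinations are unique. -/
def IsFreeLattice (O : Type u) [CommRing O] {A : Type w} [Ring A]
    {V : Type w} [AddCommGroup V] [Module A V] [Module O V]
    (Λ : Set A) (n : ℕ) (Z : Submodule O V) : Prop :=
  ∃ v : Fin n → V,
    Function.Injective (fun f : Fin n → A => ∑ i, f i • v i) ∧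
    (Z : Set V) = freeImage Λ v

/-- `X` is locally free of rank `n` over the order `Λ`: at every maximal ideal `P` of `O` the
localisation of `X` is free of rank `n` over the localisation of `Λ`. -/
def IsLocallyFree (O : Type u) [CommRing O] {A : Type w} [Ring A] [Module O A]
    {V : Type w} [AddCommGroup V] [Module A V] [Module O V]
    (Λ : Submodule O A) (n : ℕ) (X : Submodule O V) : Prop :=
  ∀ P : Ideal O, P.IsMaximal →
    ∃ v : Fin n → V,
      Function.Injective (fun f : Fin n → A => ∑ i, f i • v i) ∧
      locAt O P X = freeImage (locAt O P Λ) v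

/-- The minimal `Γ`-lattice `Γ X` containing `X`, for `Γ` a subset of `A` and `X ⊆ V`. -/
def latSpan (O : Type u) [CommRing O] {A : Type w} [Ring A]
    {V : Type w} [AddCommGroup V] [Module A V] [Module O V]
    (Γ : Set A) (X : Submodule O V) : Submodule O V :=
  Submodule.span O (Set.image2 (fun a x => a • x) Γ (X : Set V))

/-- The maximal `Γ`-stable `O`-submodule `^Γ X` contained in `X`. -/
def latCore (O : Type u) [CommRing O] {A : Type w} [Ring A]
    {V : Type w} [AddCommGroup V] [Module A V] [Module O V]
    (Γ : Set A) (X : Submodule O V) : Submodule O V :=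
  sSup {Y : Submodule O V | IsStable Γ (Y : Set V) ∧ Y ≤ X}

/-- Every locally free lattice over the order `M` (in any `A`-module) is free. -/
def LocFreeImpliesFree (O : Type u) [CommRing O] (K : Type v) [Field K] [Algebra O K]
    (A : Type w) [Ring A] [Algebra K A] [Algebra O A] [IsScalarTower O K A]
    (M : Subalgebra O A) : Prop :=
  ∀ (V : Type w) [AddCommGroup V] [Module K V] [Module A V] [IsScalarTower K A V]
    [Module O V] [IsScalarTower O K V] (n : ℕ) (X : Submodule O V),
    X.FG → Submodule.span K (X : Set V) = ⊤ →
    IsLocallyFree O (Subalgebra.toSubmodule M) n X →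
    IsFreeLattice O (M : Set A) n X


/-- The dual lattice `X^∨ = Hom_O(X, O)` of a full `O`-lattice `X ⊆ V`, realised inside the
dual space `Hom_K(V, K)` as the functionals taking `O`-values on `X`. -/
def dualLat (O : Type u) [CommRing O] (K : Type v) [Field K] [Algebra O K]
    {V : Type w} [AddCommGroup V] [Module K V] [Module O V] [IsScalarTower O K V]
    (X : Submodule O V) : Submodule O (Module.Dual K V) where
  carrier := {f | ∀ x ∈ X, f x ∈ (1 : Submodule O K)}
  add_mem' := by
    intro f g hf hg x hx
    simpa using add_mem (hf x hx) (hg x hx)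
  zero_mem' := by
    intro x hx
    simpa using zero_mem (1 : Submodule O K)
  smul_mem' := by
    intro c f hf x hx
    simpa using Submodule.smul_mem (1 : Submodule O K) c (hf x hx)

/-- The maximal `O`-submodule of `D` (inside the dual of a left `A`-module `V`) stable under
the right `Γ`-action `(f·a)(x) = f(a•x)`: this is `D^Γ` for `D` a right `Λ`-lattice. -/
def rightDualCore (O : Type u) [CommRing O] (K : Type v) [Field K] [Algebra O K]
    {A : Type w} [Ring A] [Algebra K A]
    {V : Type w} [AddCommGroup V] [Module K V] [Module A V] [SMulCommClass A K V]
    [Module O V] [IsScalarTower O K V]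
    (Γ : Set A) (D : Submodule O (Module.Dual K V)) : Submodule O (Module.Dual K V) :=
  sSup {Y : Submodule O (Module.Dual K V) |
    (∀ a ∈ Γ, ∀ f ∈ Y, f ∘ₗ DistribMulAction.toLinearMap K V a ∈ Y) ∧ Y ≤ D}

/- ## Auxiliary lemmas -/

section LocBasic

variable {O : Type u} [CommRing O] {V : Type w} [AddCommGroup V] [Module O V]
  {P : Ideal O} {M N : Submodule O V}

theorem subset_locAt (hP : P ≠ ⊤) : (M : Set V) ⊆ locAt O P M := fun x hx =>
  ⟨1, fun h => hP (Ideal.eq_top_of_isUnit_mem P h isUnit_one), by simpa using hx⟩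

theorem mem_of_forall_locAt [Nontrivial O] {x : V}
    (h : ∀ P : Ideal O, P.IsMaximal → x ∈ locAt O P N) : x ∈ N := by
  set I : Ideal O :=
    { carrier := {s | s • x ∈ N}
      add_mem' := fun {a b} ha hb => by simpa [add_smul] using add_mem ha hb
      zero_mem' := by simp
      smul_mem' := fun c a ha => by simpa [smul_smul] using N.smul_mem c ha } with hI
  have hIT : I = ⊤ := by
    by_contra hne
    obtain ⟨Q, hQ, hIQ⟩ := Ideal.exists_le_maximal I hne
    obtain ⟨s, hs, hsx⟩ := h Q hQ
    exact hs (hIQ hsx)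
  have h1 : (1 : O) ∈ I := hIT ▸ trivial
  simpa [hI] using h1

theorem eq_of_forall_locAt [Nontrivial O] {M N : Submodule O V}
    (h : ∀ P : Ideal O, P.IsMaximal → locAt O P M = locAt O P N) :
    M = N := by
  ext x
  exact ⟨fun hx => mem_of_forall_locAt fun P hP => h P hP ▸ subset_locAt hP.ne_top hx,
    fun hx => mem_of_forall_locAt fun P hP => (h P hP).symm ▸ subset_locAt hP.ne_top hx⟩

end LocBasic

section LocRing

variable (O : Type u) [CommRing O] (K : Type v) [Field K] [Algebra O K]
  (P : Ideal O) [P.IsPrime]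

/-- The localisation of `O` at `P`, as a subalgebra of `K`. -/
def locSub : Subalgebra O K where
  carrier := locAt O P (1 : Submodule O K)
  add_mem' := by
    rintro x y ⟨s, hs, hsx⟩ ⟨t, ht, hty⟩
    refine ⟨s * t, fun h => ((Ideal.IsPrime.mem_or_mem ‹_› h).elim hs ht), ?_⟩
    have h1 : (s * t) • x ∈ (1 : Submodule O K) := by
      rw [mul_comm, mul_smul]; exact Submodule.smul_mem _ _ hsx
    have h2 : (s * t) • y ∈ (1 : Submodule O K) := by
      rw [mul_smul]; exact Submodule.smul_mem _ _ hty
    rw [smul_add]; exact add_mem h1 h2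
  mul_mem' := by
    rintro x y ⟨s, hs, hsx⟩ ⟨t, ht, hty⟩
    refine ⟨s * t, fun h => ((Ideal.IsPrime.mem_or_mem ‹_› h).elim hs ht), ?_⟩
    have : (s * t) • (x * y) = (s • x) * (t • y) := by
      simp only [Algebra.smul_def, map_mul]; ring
    rw [this]
    simpa using Submodule.mul_mem_mul hsx hty
  algebraMap_mem' := fun r =>
    ⟨1, fun h => Ideal.IsPrime.ne_top ‹_› (Ideal.eq_top_of_isUnit_mem P h isUnit_one),
      by simpa using Submodule.mem_one.mpr ⟨r, rfl⟩⟩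

theorem coe_locSub : (locSub O K P : Set K) = locAt O P (1 : Submodule O K) := rfl

variable [IsFractionRing O K]

theorem locSub_isLocalization [IsDomain O] : IsLocalization.AtPrime (locSub O K P) P := by
  refine ⟨⟨?_, ?_, ?_⟩⟩
  · rintro ⟨s, hs⟩
    have hs0 : s ≠ 0 := fun h => hs (h ▸ P.zero_mem)
    have hsK : algebraMap O K s ≠ 0 := fun h =>
      hs0 (IsFractionRing.injective O K (by simpa using h))
    have hinv : (algebraMap O K s)⁻¹ ∈ locSub O K P := by
      refine ⟨s, hs, ?_⟩
      rw [Algebra.smul_def, mul_inv_cancel₀ hsK]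
      exact Submodule.mem_one.mpr ⟨1, map_one _⟩
    refine isUnit_iff_exists.mpr ⟨⟨_, hinv⟩, ?_, ?_⟩ <;>
      · apply Subtype.ext
        push_cast
        first
        | exact mul_inv_cancel₀ hsK
        | exact inv_mul_cancel₀ hsK
  · rintro ⟨z, s, hs, hsz⟩
    obtain ⟨a, ha⟩ := Submodule.mem_one.mp hsz
    refine ⟨⟨a, ⟨s, hs⟩⟩, ?_⟩
    apply Subtype.ext
    push_cast
    rw [ha, Algebra.smul_def, mul_comm]
  · intro a b h
    have : algebraMap O K a = algebraMap O K b := congrArg Subtype.val h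
    exact ⟨1, by simpa using IsFractionRing.injective O K this⟩

theorem locSub_isFractionRing [IsDomain O] : IsFractionRing ↥(locSub O K P) K := by
  refine ⟨⟨?_, ?_, ?_⟩⟩
  · rintro ⟨x, hx⟩
    have hx0 : (x : K) ≠ 0 := by
      simpa using (mem_nonZeroDivisors_iff_ne_zero.mp hx)
    exact isUnit_iff_ne_zero.mpr hx0
  · intro z
    obtain ⟨⟨a, s⟩, h⟩ := IsLocalization.surj (nonZeroDivisors O) (S := K) z
    have hs0 : algebraMap O K (s : O) ≠ 0 := by
      have : (s : O) ≠ 0 := nonZeroDivisors.coe_ne_zero s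
      exact fun hh => this (IsFractionRing.injective O K (by simpa using hh))
    refine ⟨⟨⟨algebraMap O K a, Subalgebra.algebraMap_mem _ a⟩,
      ⟨⟨algebraMap O K (s : O), Subalgebra.algebraMap_mem _ (s : O)⟩, ?_⟩⟩, ?_⟩
    · exact mem_nonZeroDivisors_iff_ne_zero.mpr (fun hh => hs0 (by
        simpa using congrArg Subtype.val hh))
    · simpa [Subalgebra.algebraMap_eq] using h
  · intro a b h
    refine ⟨1, ?_⟩
    have hv : (a : K) = (b : K) := by simpa [Subalgebra.algebraMap_eq] using h
    simp [Subtype.ext hv]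

end LocRing

section LocDvr

variable (O : Type u) [CommRing O] [IsDedekindDomain O] (K : Type v) [Field K] [Algebra O K]
  [IsFractionRing O K] (P : Ideal O) [P.IsMaximal]

theorem locSub_pir (hO : ¬IsField O) : IsPrincipalIdealRing ↥(locSub O K P) := by
  have hPbot : P ≠ ⊥ := by
    intro h
    obtain ⟨I, hbot, htop⟩ := (Ring.not_isField_iff_exists_ideal_bot_lt_and_lt_top).mp hO
    have := (‹P.IsMaximal›.eq_of_le (lt_top_iff_ne_top.mp htop) (h ▸ bot_le (a := I)))
    exact hbot.ne (by rw [← this, h])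
  haveI := locSub_isLocalization O K P
  exact (IsLocalization.AtPrime.isDiscreteValuationRing_of_dedekind_domain O hPbot
    ↥(locSub O K P)).toIsPrincipalIdealRing

end LocDvr

section DetUnit

variable {O : Type u} [CommRing O] [IsDedekindDomain O]
  {K : Type v} [Field K] [Algebra O K] [IsFractionRing O K]
  {W : Type w} [AddCommGroup W] [Module K W] [Module O W] [IsScalarTower O K W]
  (P : Ideal O) [P.IsMaximal]

/-- The localisation of a lattice at `P`, as a module over `locSub O K P`. -/
def locAtSub (L : Submodule O W) : Submodule ↥(locSub O K P) W where
  carrier := locAt O P L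
  add_mem' := by
    rintro x y ⟨s, hs, hsx⟩ ⟨t, ht, hty⟩
    refine ⟨s * t, fun h => ((Ideal.IsPrime.mem_or_mem inferInstance h).elim hs ht), ?_⟩
    have h1 : (s * t) • x ∈ L := by rw [mul_comm, mul_smul]; exact Submodule.smul_mem _ _ hsx
    have h2 : (s * t) • y ∈ L := by rw [mul_smul]; exact Submodule.smul_mem _ _ hty
    rw [smul_add]; exact add_mem h1 h2
  zero_mem' :=
    ⟨1, fun h => (Ideal.IsMaximal.ne_top ‹_›) (Ideal.eq_top_of_isUnit_mem P h isUnit_one),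
      by simpa using L.zero_mem⟩
  smul_mem' := by
    rintro ⟨r, s, hs, hsr⟩ x ⟨t, ht, htx⟩
    obtain ⟨a, ha⟩ := Submodule.mem_one.mp hsr
    refine ⟨s * t, fun h => ((Ideal.IsPrime.mem_or_mem inferInstance h).elim hs ht), ?_⟩
    have key : (s * t) • ((⟨r, s, hs, hsr⟩ : ↥(locSub O K P)) • x) = a • (t • x) := by
      show (s * t) • (r • x) = a • (t • x)
      have hh : ∀ (o : O) (y : W), o • y = algebraMap O K o • y :=
        fun o y => (algebraMap_smul K o y).symm
      rw [hh (s * t), hh a, hh t, ha, smul_smul, smul_smul]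
      congr 1
      rw [Algebra.smul_def, map_mul]
      ring
    rw [key]
    exact L.smul_mem a htx

theorem coe_locAtSub (L : Submodule O W) :
    ((locAtSub (K := K) P L : Submodule ↥(locSub O K P) W) : Set W) = locAt O P L := rfl

theorem locAtSub_eq_span (L : Submodule O W) :
    locAtSub (K := K) P L = Submodule.span ↥(locSub O K P) (L : Set W) := by
  apply le_antisymm
  · rintro x ⟨s, hs, hsx⟩
    have hs0 : s ≠ 0 := fun h => hs (h ▸ P.zero_mem)
    have hsK : algebraMap O K s ≠ 0 := fun h =>
      hs0 (IsFractionRing.injective O K (by simpa using h))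
    have hinv : (algebraMap O K s)⁻¹ ∈ locSub O K P := by
      refine ⟨s, hs, ?_⟩
      rw [Algebra.smul_def, mul_inv_cancel₀ hsK]
      exact Submodule.mem_one.mpr ⟨1, map_one _⟩
    have : x = (⟨_, hinv⟩ : ↥(locSub O K P)) • (s • x) := by
      show x = (algebraMap O K s)⁻¹ • (s • x)
      rw [← algebraMap_smul K s x, smul_smul, inv_mul_cancel₀ hsK, one_smul]
    rw [this]
    exact Submodule.smul_mem _ _ (Submodule.subset_span hsx)
  · rw [Submodule.span_le]
    intro x hx
    exact subset_locAt (Ideal.IsMaximal.ne_top ‹_›) hx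

theorem locAtSub_fg {L : Submodule O W} (hL : L.FG) :
    (locAtSub (K := K) P L).FG := by
  obtain ⟨T, hT⟩ := hL
  refine ⟨T, le_antisymm ?_ ?_⟩
  · rw [Submodule.span_le, coe_locAtSub]
    intro x hx
    exact subset_locAt (Ideal.IsMaximal.ne_top ‹_›) (hT ▸ Submodule.subset_span hx)
  · rw [locAtSub_eq_span, Submodule.span_le]
    intro x hx
    have : x ∈ Submodule.span O (T : Set W) := hT.symm ▸ hx
    refine Submodule.span_induction (p := fun z _ => z ∈ Submodule.span ↥(locSub O K P) (T : Set W))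
      (fun z hz => Submodule.subset_span hz) (Submodule.zero_mem _)
      (fun y z _ _ hy hz => Submodule.add_mem _ hy hz) ?_ this
    intro c z _ hz
    have : c • z = (algebraMap O ↥(locSub O K P) c) • z := by
      show c • z = (algebraMap O K c) • z
      rw [algebraMap_smul K c z]
    rw [this]
    exact Submodule.smul_mem _ _ hz

set_option maxHeartbeats 1000000 in
set_option synthInstance.maxHeartbeats 1000000 in
theorem det_mem_locAt (hO : ¬IsField O) (L : Submodule O W) (hFG : L.FG)
    (hfull : Submodule.span K (L : Set W) = ⊤) (g : W ≃ₗ[K] W)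
    (hg : ⇑g '' locAt O P L = locAt O P L) :
    LinearMap.det (g : W →ₗ[K] W) ∈ locAt O P (1 : Submodule O K) := by
  classical
  haveI : IsPrincipalIdealRing ↥(locSub O K P) := locSub_pir O K P hO
  haveI : IsFractionRing ↥(locSub O K P) K := locSub_isFractionRing O K P
  set R := ↥(locSub O K P) with hR
  set N : Submodule R W := locAtSub (K := K) P L with hN
  haveI : Module.Finite R ↥N := Module.Finite.iff_fg.mpr (locAtSub_fg P hFG)
  haveI : NoZeroSMulDivisors R ↥N := by
    constructor
    rintro c ⟨x, hx⟩ hcx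
    have hv0 : c • x = 0 := by
      have := congrArg Subtype.val hcx
      simpa using this
    rcases smul_eq_zero.mp (show (c : K) • x = 0 from hv0) with h | h
    · exact Or.inl (Subtype.ext h)
    · exact Or.inr (Subtype.ext h)
  haveI : Module.Free R ↥N := Module.free_of_finite_type_torsion_free'
  set ι := Module.Free.ChooseBasisIndex R ↥N with hι
  set b : Module.Basis ι R ↥N := Module.Free.chooseBasis R ↥N with hb
  set w : ι → W := fun i => ((b i : ↥N) : W) with hw
  have hmemN : ∀ i, w i ∈ N := fun i => (b i).2
  have hliR : LinearIndependent R w :=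
    b.linearIndependent.map' N.subtype (Submodule.ker_subtype N)
  have hliK : LinearIndependent K w := (LinearIndependent.iff_fractionRing R K).mp hliR
  have hspanN : ∀ x ∈ N, x ∈ Submodule.span K (Set.range w) := by
    intro x hx
    have h1 : (⟨x, hx⟩ : ↥N) ∈ Submodule.span R (Set.range ⇑b) := by
      rw [b.span_eq]; trivial
    have h2 : x ∈ Submodule.map N.subtype (Submodule.span R (Set.range ⇑b)) :=
      ⟨⟨x, hx⟩, h1, rfl⟩
    rw [Submodule.map_span] at h2
    have h3 : x ∈ Submodule.span R (Set.range w) := by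
      have : ⇑N.subtype '' Set.range ⇑b = Set.range w := by
        rw [← Set.range_comp]; rfl
      rwa [this] at h2
    refine Submodule.span_induction
      (p := fun z _ => z ∈ Submodule.span K (Set.range w))
      (fun z hz => Submodule.subset_span hz) (Submodule.zero_mem _)
      (fun y z _ _ hy hz => Submodule.add_mem _ hy hz) ?_ h3
    intro r z _ hz
    have : r • z = (r : K) • z := rfl
    rw [this]
    exact Submodule.smul_mem _ _ hz
  have hspan : ⊤ ≤ Submodule.span K (Set.range w) := by
    rw [← hfull, Submodule.span_le]
    intro x hx
    exact hspanN x (subset_locAt (Ideal.IsMaximal.ne_top ‹_›) hx)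
  set v : Module.Basis ι K W := Module.Basis.mk hliK hspan with hv
  have hvw : ∀ i, v i = w i := fun i => Module.Basis.mk_apply hliK hspan i
  have hcoord : ∀ x, ∀ hx : x ∈ N, ∀ i, v.repr x i ∈ locSub O K P := by
    intro x hx i
    have hx2 : x = ∑ j, (algebraMap R K (b.repr ⟨x, hx⟩ j)) • v j := by
      calc x = ((∑ j, b.repr ⟨x, hx⟩ j • b j : ↥N) : W) := by rw [b.sum_repr ⟨x, hx⟩]
        _ = ∑ j, (algebraMap R K (b.repr ⟨x, hx⟩ j)) • v j := by
            push_cast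
            refine Finset.sum_congr rfl fun j _ => ?_
            rw [hvw j]
            rfl
    rw [hx2, v.repr_sum_self]
    exact (b.repr ⟨x, hx⟩ i).2
  have hgN : ∀ x ∈ N, g x ∈ N := by
    intro x hx
    have : g x ∈ ⇑g '' locAt O P L := Set.mem_image_of_mem _ hx
    rwa [hg] at this
  set Mg : Matrix ι ι K := LinearMap.toMatrix v v (g : W →ₗ[K] W) with hMgdef
  have hMg : ∀ i j, Mg i j ∈ locSub O K P := by
    intro i j
    rw [hMgdef, LinearMap.toMatrix_apply]
    refine hcoord _ (hgN _ ?_) i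
    rw [hvw j]
    exact hmemN j
  set Mg' : Matrix ι ι R := fun i j => ⟨Mg i j, hMg i j⟩ with hMg'
  have hmap : Mg = (algebraMap R K).mapMatrix Mg' := by
    ext i j
    rfl
  have hdet : LinearMap.det (g : W →ₗ[K] W) = algebraMap R K Mg'.det := by
    rw [← LinearMap.det_toMatrix v (g : W →ₗ[K] W), ← hMgdef, hmap, ← RingHom.map_det]
  rw [hdet]
  exact (Mg'.det).2

end DetUnit

section DualGeneric

variable {O : Type u} [CommRing O] [IsDedekindDomain O]
  {K : Type v} [Field K] [Algebra O K] [IsFractionRing O K]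
  {V : Type w} [AddCommGroup V] [Module K V] [Module O V] [IsScalarTower O K V]

theorem dual_osmul (f : Module.Dual K V) (c : O) (z : V) : f (c • z) = c • f z := by
  rw [← algebraMap_smul K c z, map_smul, smul_eq_mul, ← Algebra.smul_def]

theorem mem_dualLat_of_span {T : Set V} {f : Module.Dual K V}
    (h : ∀ x ∈ T, f x ∈ (1 : Submodule O K)) : f ∈ dualLat O K (Submodule.span O T) := by
  intro z hz
  refine Submodule.span_induction (p := fun z _ => f z ∈ (1 : Submodule O K)) h ?_ ?_ ?_ hz
  · simpa using Submodule.zero_mem (1 : Submodule O K)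
  · intro y z _ _ hy hz'
    rw [map_add]; exact add_mem hy hz'
  · intro c z _ hz'
    rw [dual_osmul]; exact Submodule.smul_mem _ _ hz'

theorem dualMap_mem_locAt (P : Ideal O) [P.IsMaximal] (M N : Submodule O V) (hMFG : M.FG)
    (e : V ≃ₗ[K] V) (h : ∀ x ∈ M, e x ∈ locAt O P N) {f : Module.Dual K V}
    (hf : f ∈ locAt O P (dualLat O K N)) :
    e.dualMap f ∈ locAt O P (dualLat O K M) := by
  classical
  obtain ⟨T, hT⟩ := hMFG
  obtain ⟨s, hs, hsf⟩ := hf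
  have hx : ∀ t : {t // t ∈ T}, ∃ u : O, u ∉ P ∧ u • e (t : V) ∈ N := fun t =>
    h t (hT ▸ Submodule.subset_span t.2)
  choose uu hu1 hu2 using hx
  refine ⟨s * ∏ t ∈ T.attach, uu t, ?_, ?_⟩
  · intro hmem
    rcases (Ideal.IsPrime.mem_or_mem inferInstance hmem) with h' | h'
    · exact hs h'
    · obtain ⟨t, _, ht⟩ := (Ideal.IsPrime.prod_mem_iff).mp h'
      exact hu1 t ht
  · rw [← hT]
    apply mem_dualLat_of_span
    intro x hxT
    have hkey : (s * uu ⟨x, hxT⟩) • f (e x) ∈ (1 : Submodule O K) := by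
      have h1 : (s • f) (uu ⟨x, hxT⟩ • e x) ∈ (1 : Submodule O K) := hsf _ (hu2 ⟨x, hxT⟩)
      rw [LinearMap.smul_apply, dual_osmul, smul_smul] at h1
      exact h1
    have hprod : (∏ t ∈ T.attach, uu t) = uu ⟨x, hxT⟩ * ∏ t ∈ T.attach.erase ⟨x, hxT⟩, uu t :=
      (Finset.mul_prod_erase T.attach uu (T.mem_attach ⟨x, hxT⟩)).symm
    have happ : ((s * ∏ t ∈ T.attach, uu t) • e.dualMap f) x
        = (∏ t ∈ T.attach.erase ⟨x, hxT⟩, uu t) • ((s * uu ⟨x, hxT⟩) • f (e x)) := by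
      rw [LinearMap.smul_apply]
      have : e.dualMap f x = f (e x) := rfl
      rw [this, smul_smul, hprod]
      congr 1
      ring
    rw [happ]
    exact Submodule.smul_mem _ _ hkey

theorem dualLat_fg (X : Submodule O V) (hXFG : X.FG)
    (hXfull : Submodule.span K (X : Set V) = ⊤) : (dualLat O K X).FG := by
  classical
  obtain ⟨T, hT⟩ := hXFG
  have hTfull : Submodule.span K (T : Set V) = ⊤ := by
    rw [← hXfull, ← hT, Submodule.span_span_of_tower]
  set Φ : Module.Dual K V →ₗ[O] ({x // x ∈ T} → K) :=
    { toFun := fun f t => f t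
      map_add' := fun f g => rfl
      map_smul' := fun c f => rfl } with hΦ
  have hΦinj : Function.Injective Φ := by
    intro f g hfg
    refine LinearMap.ext_on hTfull fun x hx => ?_
    exact congrFun hfg ⟨x, hx⟩
  set Npi : Submodule O ({x // x ∈ T} → K) :=
    Submodule.pi Set.univ (fun _ => (1 : Submodule O K)) with hNpi
  have hNpiFG : Npi.FG :=
    Submodule.fg_pi (fun i => ⟨{1}, by simp [Submodule.one_eq_span]⟩)
  have hle : (dualLat O K X).map Φ ≤ Npi := by
    rintro _ ⟨f, hf, rfl⟩
    refine Submodule.mem_pi.mpr fun t _ => ?_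
    exact hf t (hT ▸ Submodule.subset_span t.2)
  haveI := isNoetherian_of_fg_of_noetherian Npi hNpiFG
  have hmapFG : ((dualLat O K X).map Φ).FG := by
    have h2 : (dualLat O K X).map Φ
        = (Submodule.comap Npi.subtype ((dualLat O K X).map Φ)).map Npi.subtype := by
      rw [Submodule.map_comap_subtype]
      exact (inf_eq_right.mpr hle).symm
    rw [h2]
    exact (IsNoetherian.noetherian _).map _
  exact Submodule.fg_of_fg_map_injective Φ hΦinj hmapFG

theorem dualLat_full (X : Submodule O V) (hXFG : X.FG)
    (hXfull : Submodule.span K (X : Set V) = ⊤) :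
    Submodule.span K ((dualLat O K X : Set (Module.Dual K V))) = ⊤ := by
  classical
  obtain ⟨T, hT⟩ := hXFG
  rw [eq_top_iff]
  rintro f -
  obtain ⟨d, hd⟩ := IsLocalization.exist_integer_multiples_of_finset (nonZeroDivisors O)
    (T.image f)
  have hdf : (d : O) • f ∈ dualLat O K X := by
    rw [← hT]
    apply mem_dualLat_of_span
    intro x hx
    obtain ⟨a, ha⟩ := hd (f x) (Finset.mem_image_of_mem f hx)
    rw [LinearMap.smul_apply]
    exact Submodule.mem_one.mpr ⟨a, by simpa using ha⟩
  have hd0 : algebraMap O K (d : O) ≠ 0 := by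
    have : (d : O) ≠ 0 := nonZeroDivisors.coe_ne_zero d
    exact fun hh => this (IsFractionRing.injective O K (by simpa using hh))
  have hf2 : f = (algebraMap O K (d : O))⁻¹ • ((d : O) • f) := by
    ext x
    simp only [LinearMap.smul_apply, smul_eq_mul]
    rw [Algebra.smul_def]
    field_simp
  rw [hf2]
  exact Submodule.smul_mem _ _ (Submodule.subset_span hdf)

theorem locAt_span_singleton_mul (P : Ideal O) [P.IsMaximal] {d u u' : K}
    (hu : u ∈ locAt O P (1 : Submodule O K)) (hu' : u' ∈ locAt O P (1 : Submodule O K))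
    (huu' : u * u' = 1) :
    locAt O P (Submodule.span O {d * u}) = locAt O P (Submodule.span O {d}) := by
  obtain ⟨σ, hσ, hcmem⟩ := hu
  obtain ⟨c, hc⟩ := Submodule.mem_one.mp hcmem
  obtain ⟨σ', hσ', hbmem⟩ := hu'
  obtain ⟨b, hb⟩ := Submodule.mem_one.mp hbmem
  ext x
  constructor
  · rintro ⟨s, hs, hsx⟩
    obtain ⟨a, ha⟩ := Submodule.mem_span_singleton.mp hsx
    refine ⟨σ * s, fun hh => ((Ideal.IsPrime.mem_or_mem inferInstance hh).elim hσ hs), ?_⟩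
    refine Submodule.mem_span_singleton.mpr ⟨a * c, ?_⟩
    have hc' : algebraMap O K c = algebraMap O K σ * u := by rw [hc, Algebra.smul_def]
    rw [mul_smul σ s x, ← ha, Algebra.smul_def, Algebra.smul_def, Algebra.smul_def,
      map_mul, hc']
    ring
  · rintro ⟨s, hs, hsx⟩
    obtain ⟨a, ha⟩ := Submodule.mem_span_singleton.mp hsx
    refine ⟨σ' * s, fun hh => ((Ideal.IsPrime.mem_or_mem inferInstance hh).elim hσ' hs), ?_⟩
    refine Submodule.mem_span_singleton.mpr ⟨a * b, ?_⟩
    have hb' : algebraMap O K b = algebraMap O K σ' * u' := by rw [hb, Algebra.smul_def]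
    rw [mul_smul σ' s x, ← ha, Algebra.smul_def, Algebra.smul_def, Algebra.smul_def,
      map_mul, hb']
    linear_combination (algebraMap O K a * algebraMap O K σ' * d) * huu'

theorem det_dualMap' [FiniteDimensional K V] (f : V →ₗ[K] V) :
    LinearMap.det (f.dualMap) = LinearMap.det f := by
  classical
  set bb := Module.finBasis K V
  rw [← LinearMap.det_toMatrix bb f, ← LinearMap.det_toMatrix bb.dualBasis f.dualMap,
    LinearMap.dualMap_def, LinearMap.toMatrix_transpose, Matrix.det_transpose]

end DualGeneric

section Master

variable {O : Type u} [CommRing O] [IsDedekindDomain O]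
  {K : Type v} [Field K] [Algebra O K] [IsFractionRing O K]
  {B : Type w} [Ring B] [Algebra K B] [Algebra O B] [IsScalarTower O K B]
  {V : Type w} [AddCommGroup V] [Module K V] [Module B V] [IsScalarTower K B V]
  [SMulCommClass B K V] [Module O V] [IsScalarTower O K V]

include K in
theorem bsmul_osmul (a : B) (c : O) (z : V) : a • (c • z) = c • (a • z) := by
  rw [← algebraMap_smul K c z, ← algebraMap_smul K c (a • z), smul_comm]

include K in
theorem osmul_bsmul (c : O) (a : B) (z : V) : (c • a) • z = c • (a • z) := by
  rw [← algebraMap_smul K c a, smul_assoc, algebraMap_smul]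

include K in
theorem smul_mem_latSpan {S : Submodule O B}
    (hmul : ∀ a ∈ S, ∀ b ∈ S, a * b ∈ S) {X : Submodule O V} {a : B} (ha : a ∈ S)
    {z : V} (hz : z ∈ latSpan O (S : Set B) X) : a • z ∈ latSpan O (S : Set B) X := by
  refine Submodule.span_induction (p := fun z _ => a • z ∈ latSpan O (S : Set B) X)
    ?_ ?_ ?_ ?_ hz
  · rintro _ ⟨b, hb, x, hx, rfl⟩
    rw [smul_smul]
    exact Submodule.subset_span ⟨a * b, hmul a ha b hb, x, hx, rfl⟩
  · show a • (0 : V) ∈ latSpan O (S : Set B) X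
    rw [smul_zero]; exact zero_mem _
  · intro y z _ _ hy hz'
    show a • (y + z) ∈ latSpan O (S : Set B) X
    rw [smul_add]; exact add_mem hy hz'
  · intro c z _ h
    show a • (c • z) ∈ latSpan O (S : Set B) X
    rw [bsmul_osmul (K := K)]; exact Submodule.smul_mem _ _ h

include K in
theorem le_latSpan {S : Submodule O B} (h1 : (1 : B) ∈ S) (X : Submodule O V) :
    X ≤ latSpan O (S : Set B) X := fun x hx =>
  Submodule.subset_span ⟨1, h1, x, hx, one_smul B x⟩

include K in
theorem latSpan_fg {S : Submodule O B} (hSFG : S.FG) {X : Submodule O V} (hXFG : X.FG) :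
    (latSpan O (S : Set B) X).FG := by
  classical
  obtain ⟨T, hT⟩ := hSFG
  obtain ⟨U, hU⟩ := hXFG
  refine Submodule.fg_def.mpr ⟨Set.image2 (· • ·) (T : Set B) (U : Set V),
    Set.Finite.image2 _ T.finite_toSet U.finite_toSet, ?_⟩
  apply le_antisymm
  · rw [Submodule.span_le]
    rintro _ ⟨a, ha, x, hx, rfl⟩
    exact Submodule.subset_span
      ⟨a, hT ▸ Submodule.subset_span ha, x, hU ▸ Submodule.subset_span hx, rfl⟩
  · rw [latSpan, Submodule.span_le]
    rintro _ ⟨a, ha, x, hx, rfl⟩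
    have ha' : a ∈ Submodule.span O (T : Set B) := hT.symm ▸ ha
    have hx' : x ∈ Submodule.span O (U : Set V) := hU.symm ▸ hx
    refine Submodule.span_induction
      (p := fun b _ =>
        b • x ∈ Submodule.span O (Set.image2 (· • ·) (T : Set B) (U : Set V)))
      ?_ ?_ ?_ ?_ ha'
    · intro t ht
      refine Submodule.span_induction
        (p := fun y _ =>
          t • y ∈ Submodule.span O (Set.image2 (· • ·) (T : Set B) (U : Set V)))
        ?_ ?_ ?_ ?_ hx'
      · intro uu huu
        exact Submodule.subset_span ⟨t, ht, uu, huu, rfl⟩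
      · show t • (0 : V) ∈ Submodule.span O (Set.image2 (· • ·) (T : Set B) (U : Set V))
        rw [smul_zero]; exact zero_mem _
      · intro y z _ _ hy hz
        show t • (y + z) ∈ Submodule.span O (Set.image2 (· • ·) (T : Set B) (U : Set V))
        rw [smul_add]; exact add_mem hy hz
      · intro c y _ hy
        show t • (c • y) ∈ Submodule.span O (Set.image2 (· • ·) (T : Set B) (U : Set V))
        rw [bsmul_osmul (K := K)]; exact Submodule.smul_mem _ _ hy
    · show (0 : B) • x ∈ Submodule.span O (Set.image2 (· • ·) (T : Set B) (U : Set V))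
      rw [zero_smul]; exact zero_mem _
    · intro b c _ _ hb hc
      show (b + c) • x ∈ Submodule.span O (Set.image2 (· • ·) (T : Set B) (U : Set V))
      rw [add_smul]; exact add_mem hb hc
    · intro c b _ hb
      show (c • b) • x ∈ Submodule.span O (Set.image2 (· • ·) (T : Set B) (U : Set V))
      rw [osmul_bsmul (K := K)]; exact Submodule.smul_mem _ _ hb

theorem dualLat_latSpan (S : Submodule O B) (h1 : (1 : B) ∈ S)
    (hmul : ∀ a ∈ S, ∀ b ∈ S, a * b ∈ S) (X : Submodule O V) :
    dualLat O K (latSpan O (S : Set B) X) = rightDualCore O K (S : Set B) (dualLat O K X) := by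
  apply le_antisymm
  · apply le_sSup
    constructor
    · intro a ha f hf z hz
      have hc : (f ∘ₗ DistribMulAction.toLinearMap K V a) z = f (a • z) := rfl
      rw [hc]
      exact hf _ (smul_mem_latSpan (K := K) hmul ha hz)
    · intro f hf x hx
      exact hf x (le_latSpan (K := K) h1 X hx)
  · apply sSup_le
    rintro Y ⟨hst, hle⟩ f hf z hz
    refine Submodule.span_induction (p := fun z _ => f z ∈ (1 : Submodule O K)) ?_ ?_ ?_ ?_ hz
    · rintro _ ⟨a, ha, x, hx, rfl⟩
      have hc : f (a • x) = (f ∘ₗ DistribMulAction.toLinearMap K V a) x := rfl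
      rw [hc]
      exact hle (hst a ha f hf) x hx
    · simpa using Submodule.zero_mem (1 : Submodule O K)
    · intro y z _ _ hy hz'
      rw [map_add]; exact add_mem hy hz'
    · intro c z _ h
      rw [dual_osmul]; exact Submodule.smul_mem _ _ h

theorem master_lemma (hO : ¬IsField O) (S : Submodule O B) (h1 : (1 : B) ∈ S)
    (hmul : ∀ a ∈ S, ∀ b ∈ S, a * b ∈ S) (hSFG : S.FG)
    (X : Submodule O V) (hXFG : X.FG) (hXfull : Submodule.span K (X : Set V) = ⊤) :
    dualLat O K (latSpan O (S : Set B) X) = rightDualCore O K (S : Set B) (dualLat O K X) ∧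
    ∀ I1 I2 : Submodule O K,
      IsIdx O K (latSpan O (S : Set B) X) X I1 →
      IsIdx O K (dualLat O K X) (rightDualCore O K (S : Set B) (dualLat O K X)) I2 →
      I1 = I2 := by
  have hpart1 := dualLat_latSpan (K := K) S h1 hmul X
  refine ⟨hpart1, ?_⟩
  intro I1 I2 hI1 hI2
  rw [← hpart1] at hI2
  set Y := latSpan O (S : Set B) X with hY
  have hYFG : Y.FG := latSpan_fg (K := K) hSFG hXFG
  have hXleY : X ≤ Y := le_latSpan (K := K) h1 X
  haveI : FiniteDimensional K V := by
    obtain ⟨T, hT⟩ := hXFG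
    refine Module.Finite.of_fg_top ⟨T, ?_⟩
    rw [← hXfull, ← hT, Submodule.span_span_of_tower]
  set D := dualLat O K X with hD
  set C := dualLat O K Y with hC
  have hDFG : D.FG := dualLat_fg X hXFG hXfull
  have hDfull : Submodule.span K (D : Set (Module.Dual K V)) = ⊤ := dualLat_full X hXFG hXfull
  apply eq_of_forall_locAt
  intro P hP
  haveI : P.IsMaximal := hP
  obtain ⟨e1, he1img, he1det⟩ := hI1 P hP
  obtain ⟨e2, he2img, he2det⟩ := hI2 P hP
  set ε : Module.Dual K V ≃ₗ[K] Module.Dual K V := e1.dualMap with hε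
  have hεimg : ⇑ε '' locAt O P D = locAt O P C := by
    apply Set.Subset.antisymm
    · rintro _ ⟨f, hf, rfl⟩
      exact dualMap_mem_locAt P Y X hYFG e1
        (fun z hz => he1img ▸ Set.mem_image_of_mem _ (subset_locAt hP.ne_top hz)) hf
    · intro g hg
      refine ⟨e1.symm.dualMap g, ?_, ?_⟩
      · refine dualMap_mem_locAt P X Y hXFG e1.symm (fun x hx => ?_) hg
        have hx' : x ∈ locAt O P X := subset_locAt hP.ne_top hx
        rw [← he1img] at hx'
        obtain ⟨z, hz, hez⟩ := hx'
        have : e1.symm x = z := by rw [← hez]; exact e1.symm_apply_apply z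
        rw [this]
        exact hz
      · ext x
        simp [hε]
  set φ : Module.Dual K V ≃ₗ[K] Module.Dual K V := e2.trans ε.symm with hφ
  have hφimg : ⇑φ '' locAt O P D = locAt O P D := by
    have hcomp : ⇑φ = ⇑ε.symm ∘ ⇑e2 := rfl
    rw [hcomp, Set.image_comp, he2img, ← hεimg, ← Set.image_comp]
    have h2 : ⇑ε.symm ∘ ⇑ε = id := funext fun f => ε.symm_apply_apply f
    rw [h2, Set.image_id]
  have hφsymmimg : ⇑φ.symm '' locAt O P D = locAt O P D := by
    conv_lhs => rw [← hφimg]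
    rw [← Set.image_comp]
    have h2 : ⇑φ.symm ∘ ⇑φ = id := funext fun f => φ.symm_apply_apply f
    rw [h2, Set.image_id]
  have hu : LinearMap.det (φ : Module.Dual K V →ₗ[K] Module.Dual K V)
      ∈ locAt O P (1 : Submodule O K) := det_mem_locAt P hO D hDFG hDfull φ hφimg
  have hu' : LinearMap.det (φ.symm : Module.Dual K V →ₗ[K] Module.Dual K V)
      ∈ locAt O P (1 : Submodule O K) := det_mem_locAt P hO D hDFG hDfull φ.symm hφsymmimg
  have huu' : LinearMap.det (φ : Module.Dual K V →ₗ[K] Module.Dual K V)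
      * LinearMap.det (φ.symm : Module.Dual K V →ₗ[K] Module.Dual K V) = 1 := by
    rw [← LinearMap.det_comp]
    have hid : (φ : Module.Dual K V →ₗ[K] Module.Dual K V) ∘ₗ
        (φ.symm : Module.Dual K V →ₗ[K] Module.Dual K V) = LinearMap.id := by
      ext f x
      simp
    rw [hid, LinearMap.det_id]
  have hdetε : LinearMap.det (ε : Module.Dual K V →ₗ[K] Module.Dual K V)
      = LinearMap.det (e1 : V →ₗ[K] V) := by
    have hc : (ε : Module.Dual K V →ₗ[K] Module.Dual K V)
        = (e1 : V →ₗ[K] V).dualMap := rfl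
    rw [hc, det_dualMap']
  have hdete2 : LinearMap.det (e2 : Module.Dual K V →ₗ[K] Module.Dual K V)
      = LinearMap.det (e1 : V →ₗ[K] V)
        * LinearMap.det (φ : Module.Dual K V →ₗ[K] Module.Dual K V) := by
    have he2eq : (e2 : Module.Dual K V →ₗ[K] Module.Dual K V)
        = (ε : Module.Dual K V →ₗ[K] Module.Dual K V) ∘ₗ
          (φ : Module.Dual K V →ₗ[K] Module.Dual K V) := by
      ext f x
      simp [hφ]
    rw [he2eq, LinearMap.det_comp, hdetε]
  rw [he1det, he2det, hdete2]
  exact (locAt_span_singleton_mul P hu hu' huu').symm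

end Master
/-- **Lemma.** Let `O` be a Dedekind domain with fraction field `K ≠ O` and `Λ ⊆ Γ`
`O`-orders in a finite-dimensional `K`-algebra `A`.
(i) For a left `Λ`-lattice `X`: `(Γ X)^∨ = (X^∨)^Γ` and `[Γ X : X]_O = [X^∨ : (X^∨)^Γ]_O`.
(ii) For a right `Λ`-lattice `X` (a module over `Aᵐᵒᵖ`): `(X Γ)^∨ = ^Γ(X^∨)` and
`[X Γ : X]_O = [X^∨ : ^Γ(X^∨)]_O`. -/
theorem dual_of_overorder_span
    (O : Type u) [CommRing O] [IsDedekindDomain O] (hO : ¬IsField O)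
    (K : Type v) [Field K] [Algebra O K] [IsFractionRing O K]
    (A : Type w) [Ring A] [Algebra K A] [Algebra O A] [IsScalarTower O K A]
    [FiniteDimensional K A]
    (Λ Γ : Subalgebra O A) (hΛ : IsOrder O K A Λ) (hΓ : IsOrder O K A Γ) (hΛΓ : Λ ≤ Γ) :
    (∀ (V : Type w) [AddCommGroup V] [Module K V] [Module A V] [IsScalarTower K A V]
      [SMulCommClass A K V] [Module O V] [IsScalarTower O K V] (X : Submodule O V),
      X.FG → Submodule.span K (X : Set V) = ⊤ → IsStable (Λ : Set A) (X : Set V) →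
      (dualLat O K (latSpan O (Γ : Set A) X)
          = rightDualCore O K (Γ : Set A) (dualLat O K X) ∧
        ∀ I1 I2 : Submodule O K,
          IsIdx O K (latSpan O (Γ : Set A) X) X I1 →
          IsIdx O K (dualLat O K X) (rightDualCore O K (Γ : Set A) (dualLat O K X)) I2 →
          I1 = I2)) ∧
    (∀ (V : Type w) [AddCommGroup V] [Module K V] [Module Aᵐᵒᵖ V] [IsScalarTower K Aᵐᵒᵖ V]
      [SMulCommClass Aᵐᵒᵖ K V] [Module O V] [IsScalarTower O K V] (X : Submodule O V),
      X.FG → Submodule.span K (X : Set V) = ⊤ →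
      IsStable (MulOpposite.op '' (Λ : Set A)) (X : Set V) →
      (dualLat O K (latSpan O (MulOpposite.op '' (Γ : Set A)) X)
          = rightDualCore O K (MulOpposite.op '' (Γ : Set A)) (dualLat O K X) ∧
        ∀ I1 I2 : Submodule O K,
          IsIdx O K (latSpan O (MulOpposite.op '' (Γ : Set A)) X) X I1 →
          IsIdx O K (dualLat O K X)
            (rightDualCore O K (MulOpposite.op '' (Γ : Set A)) (dualLat O K X)) I2 →
          I1 = I2)) := by
  constructor
  · intro V _ _ _ _ _ _ _ X hFG hfull _
    have h := master_lemma (O := O) (K := K) (B := A) (V := V) hO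
      (Subalgebra.toSubmodule Γ) Γ.one_mem
      (fun a ha b hb => Γ.mul_mem ha hb) hΓ.1 X hFG hfull
    rwa [Subalgebra.coe_toSubmodule] at h
  · intro V _ _ _ _ _ _ _ X hFG hfull _
    set S : Submodule O Aᵐᵒᵖ :=
      (Subalgebra.toSubmodule Γ).map (MulOpposite.opLinearEquiv O).toLinearMap with hS
    have hcoe : (S : Set Aᵐᵒᵖ) = MulOpposite.op '' (Γ : Set A) := by
      simp [hS, Submodule.map_coe]
    have h1 : (1 : Aᵐᵒᵖ) ∈ S := ⟨1, Γ.one_mem, by simp⟩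
    have hmul : ∀ a ∈ S, ∀ b ∈ S, a * b ∈ S := by
      rintro _ ⟨x, hx, rfl⟩ _ ⟨y, hy, rfl⟩
      exact ⟨y * x, Γ.mul_mem hy hx, by simp⟩
    have hSFG : S.FG := (hΓ.1).map _
    have h := master_lemma (O := O) (K := K) (B := Aᵐᵒᵖ) (V := V) hO S h1 hmul hSFG X hFG hfull
    rwa [hcoe] at h
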